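/- There is a computably enumerable set A ⊆ ℕ such that for every computably enumerable set W, the upper density of the symmetric difference of A and the complement of W equals 1. -/

import Mathlib

open Filter

noncomputable def pdens (S : Set ℕ) (n : ℕ) : ℝ := (S ∩ Set.Iio n).ncard / n

noncomputable def lowerDensity (S : Set ℕ) : ℝ := liminf (pdens S) atTop

noncomputable def upperDensity (S : Set ℕ) : ℝ := limsup (pdens S) atTop

namespace Stmt16Aux

open Nat Nat.Partrec Nat.Partrec.Code

/-! ### Computability part -/

theorem primrec_factorial : Primrec Nat.factorial := by
  have h : Primrec (fun m => Nat.rec 1 (fun n ih => (n+1) * ih) m : ℕ → ℕ) :=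
    Primrec.nat_rec₁ 1 (Primrec.nat_mul.comp₂ (Primrec.succ.comp₂ Primrec₂.left) Primrec₂.right)
  exact h.of_eq fun n => by induction n with
    | zero => rfl
    | succ n ih => simp [Nat.factorial_succ, ih]

/-- `idx m` is the unique `n` with `n ! ≤ m < (n+1)!` (for `m ≥ 1`). -/
def idx (m : ℕ) : ℕ := Nat.findGreatest (fun n => n ! ≤ m) m

theorem primrec_idx : Primrec idx :=
  Primrec.nat_findGreatest Primrec.id
    (Primrec.nat_le.comp (primrec_factorial.comp Primrec.snd) Primrec.fst)

theorem idx_eq {n m : ℕ} (h1 : n ! ≤ m) (h2 : m < (n+1)!) : idx m = n := by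
  have hnm : n ≤ m := le_trans (Nat.self_le_factorial n) h1
  apply (Nat.findGreatest_eq_iff).2
  refine ⟨hnm, fun _ => h1, fun k hk hk' => ?_⟩
  intro hkf
  exact absurd (le_trans (Nat.factorial_le hk) hkf) (not_le.2 h2)

/-- A standard enumeration of the c.e. sets, each set appearing infinitely often. -/
def WW (n : ℕ) : Set ℕ := {m | (eval (Denumerable.ofNat Code n.unpair.1) m).Dom}

/-- The c.e. set witnessing the theorem: `A = ⋃ n, WW n ∩ [n!, (n+1)!)`. -/
def A : Set ℕ := {m | 1 ≤ m ∧ m ∈ WW (idx m)}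

def cOf (m : ℕ) : Code := Denumerable.ofNat Code (idx m).unpair.1

theorem computable_cOf : Computable cOf :=
  (Computable.ofNat Code).comp ((Primrec.fst.comp (Primrec.unpair.comp primrec_idx)).to_comp)

theorem mem_A_iff {n m : ℕ} (h1 : n ! ≤ m) (h2 : m < (n+1)!) : m ∈ A ↔ m ∈ WW n := by
  have h0 : 1 ≤ m := le_trans (Nat.one_le_iff_ne_zero.2 (Nat.factorial_ne_zero n)) h1
  simp [A, idx_eq h1 h2, h0]

theorem repred_A : REPred (· ∈ A) := by
  have pf : _root_.Partrec fun m => bif decide (1 ≤ m) then eval (cOf m) m else Part.none :=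
    Partrec.cond ((Primrec.nat_le.comp (Primrec.const 1) Primrec.id).decide.to_comp)
      (eval_part.comp computable_cOf Computable.id) Partrec.none
  refine pf.dom_re.of_eq fun m => ?_
  cases Nat.eq_zero_or_pos m with
  | inl h => subst h; simp [A]
  | inr h =>
    have hd : decide (1 ≤ m) = true := decide_eq_true h
    simp only [hd, cond_true, A, WW, cOf, Set.mem_setOf_eq]
    exact ⟨fun hh => ⟨h, hh⟩, fun hh => hh.2⟩

theorem exists_code_of_repred {W : Set ℕ} (hW : REPred (· ∈ W)) :
    ∃ c : Code, ∀ m, m ∈ W ↔ (eval c m).Dom := by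
  have h1 : _root_.Partrec fun m => (Part.assert (m ∈ W) fun _ => Part.some ()).map fun _ => (0:ℕ) :=
    hW.map ((Computable.const 0).comp Computable.fst).to₂
  obtain ⟨c, hc⟩ := exists_code.1 (Partrec.nat_iff.1 h1)
  refine ⟨c, fun m => ?_⟩
  rw [hc]
  simp [Part.assert]

/-! ### Density part -/

theorem ncard_Iio (n : ℕ) : (Set.Iio n).ncard = n := by
  rw [← Finset.coe_Iio, Set.ncard_coe_finset, Nat.card_Iio]

theorem pdens_nonneg (S : Set ℕ) (n : ℕ) : 0 ≤ pdens S n := by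
  unfold pdens; positivity

theorem pdens_le_one (S : Set ℕ) (n : ℕ) : pdens S n ≤ 1 := by
  rcases Nat.eq_zero_or_pos n with h | h
  · subst h; simp [pdens]
  · unfold pdens
    rw [div_le_one (by exact_mod_cast h)]
    have := Set.ncard_le_ncard (Set.inter_subset_right (s := S) (t := Set.Iio n))
      (Set.finite_Iio n)
    rw [ncard_Iio] at this
    exact_mod_cast this

theorem pdens_ge {S : Set ℕ} {n : ℕ} (h : Set.Ico (n !) ((n+1)!) ⊆ S) :
    1 - 1/(n+1 : ℝ) ≤ pdens S ((n+1)!) := by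
  set N := (n+1)!
  have hfac : (N : ℝ) = (n+1) * (n ! : ℝ) := by
    push_cast [N, Nat.factorial_succ]; ring
  have hfpos : (0:ℝ) < (n ! : ℝ) := by exact_mod_cast Nat.factorial_pos n
  have hNpos : (0:ℝ) < (N : ℝ) := by rw [hfac]; positivity
  have hsub : Set.Ico (n !) N ⊆ S ∩ Set.Iio N := fun m hm => ⟨h hm, hm.2⟩
  have hcard : (N - n ! : ℕ) ≤ (S ∩ Set.Iio N).ncard := by
    have : (Set.Ico (n !) N).ncard = N - n ! := by
      rw [← Finset.coe_Ico, Set.ncard_coe_finset, Nat.card_Ico]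
    rw [← this]
    exact Set.ncard_le_ncard hsub ((Set.finite_Iio N).inter_of_right _)
  have hle : n ! ≤ N := Nat.factorial_le (Nat.le_succ n)
  have : ((N : ℝ) - n !) / N ≤ pdens S N := by
    unfold pdens
    apply div_le_div_of_nonneg_right ?_ hNpos.le
    have := (Nat.cast_le (α := ℝ)).2 hcard
    rw [Nat.cast_sub hle] at this
    exact this
  refine le_trans (le_of_eq ?_) this
  rw [hfac]; field_simp

end Stmt16Aux

open Stmt16Aux Nat Nat.Partrec Nat.Partrec.Code in
theorem stmt16 :
    ∃ A : Set ℕ, REPred (· ∈ A) ∧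
      ∀ W : Set ℕ, REPred (· ∈ W) → upperDensity (symmDiff A Wᶜ) = 1 := by
  refine ⟨A, repred_A, fun W hW => ?_⟩
  obtain ⟨c, hc⟩ := exists_code_of_repred hW
  set i := Encodable.encode c with hi
  set S := symmDiff A Wᶜ with hS
  -- On each interval `[n!, (n+1)!)` with `n = pair i j`, `A` agrees with `W`,
  -- hence the interval is contained in `S`.
  have key : ∀ j : ℕ, Set.Ico ((Nat.pair i j)!) ((Nat.pair i j + 1)!) ⊆ S := by
    intro j m hm
    set n := Nat.pair i j
    have hAW : m ∈ A ↔ m ∈ W := by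
      rw [mem_A_iff hm.1 hm.2]
      have : WW n = W := by
        ext x
        simp only [WW, Set.mem_setOf_eq, n, Nat.unpair_pair, hi, Denumerable.ofNat_encode]
        exact (hc x).symm
      rw [this]
    rw [hS, Set.mem_symmDiff]
    by_cases hmw : m ∈ W
    · exact Or.inl ⟨hAW.2 hmw, by simp [hmw]⟩
    · exact Or.inr ⟨by simp [hmw], fun hA => hmw (hAW.1 hA)⟩
  have h1 : ∀ᶠ k in (atTop : Filter ℕ), pdens S k ≤ 1 :=
    Eventually.of_forall (pdens_le_one S)
  have hub : limsup (pdens S) atTop ≤ 1 :=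
    limsup_le_of_le (isCoboundedUnder_le_of_le atTop fun k => pdens_nonneg S k) h1
  have hlb : 1 ≤ limsup (pdens S) atTop := by
    refine le_of_forall_lt_imp_le_of_dense fun a ha => ?_
    refine le_limsup_of_frequently_le ?_ ⟨1, eventually_map.2 h1⟩
    rw [frequently_atTop]
    intro b
    obtain ⟨k, hk⟩ := exists_nat_one_div_lt (sub_pos.2 ha)
    set j := max b k
    set n := Nat.pair i j with hn
    refine ⟨(n+1)!, ?_, ?_⟩
    · calc b ≤ j := le_max_left _ _
        _ ≤ n := Nat.right_le_pair _ _
        _ ≤ (n+1)! := le_trans (Nat.le_succ n) (Nat.self_le_factorial _)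
    · have h1 : a ≤ 1 - 1/(n+1 : ℝ) := by
        have hkn : (k : ℝ) + 1 ≤ (n : ℝ) + 1 := by
          have : k ≤ n := le_trans (le_max_right b k) (Nat.right_le_pair _ _)
          exact_mod_cast Nat.succ_le_succ this
        have h2 : 1/((n:ℝ)+1) ≤ 1/((k:ℝ)+1) :=
          one_div_le_one_div_of_le (by positivity) hkn
        have := h2.trans hk.le
        linarith
      exact h1.trans (pdens_ge (key j))
  rw [upperDensity]
  linarith
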